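/- The function ψ₁(t) = (1/2)·t·v_⋆'(t), with v_⋆(t) = tanh(t/√2), satisfies the inhomogeneous linearized Allen–Cahn equation ψ₁''(t) + (1 − 3 v_⋆(t)²) ψ₁(t) = v_⋆''(t) for every t ∈ ℝ. Moreover ψ₁ is odd, so ∫_ℝ ψ₁(t) v_⋆'(t) dt = 0. -/

import Mathlib

open MeasureTheory

lemma hasDerivAt_tanh' (x : ℝ) : HasDerivAt Real.tanh (1 - Real.tanh x ^ 2) x := by
  have hc : Real.cosh x ≠ 0 := (Real.cosh_pos x).ne'
  have h := (Real.hasDerivAt_sinh x).div (Real.hasDerivAt_cosh x) hc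
  have heq : Real.tanh = fun x => Real.sinh x / Real.cosh x := by
    funext y; exact Real.tanh_eq_sinh_div_cosh y
  rw [heq]
  refine h.congr_deriv ?_
  show _ = 1 - (Real.sinh x / Real.cosh x) ^ 2
  have hsq := Real.cosh_sq_sub_sinh_sq x
  field_simp

/-- The function `ψ₁ t = (1/2) t v⋆'(t)` solves the inhomogeneous linearized
Allen–Cahn equation `ψ₁'' + (1 - 3 v⋆²) ψ₁ = v⋆''`; moreover `ψ₁` is odd, so
`∫ ψ₁ v⋆' = 0`. -/
theorem stmt_5 (v ψ₁ : ℝ → ℝ)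
    (hv : v = fun t => Real.tanh (t / Real.sqrt 2))
    (hψ₁ : ψ₁ = fun t => (1 / 2) * t * deriv v t) :
    (∀ t : ℝ, deriv (deriv ψ₁) t + (1 - 3 * (v t) ^ 2) * ψ₁ t = deriv (deriv v) t) ∧
    (∀ t : ℝ, ψ₁ (-t) = -ψ₁ t) ∧
    ∫ t : ℝ, ψ₁ t * deriv v t = 0 := by
  have hs : Real.sqrt 2 ≠ 0 := by positivity
  have hs2 : Real.sqrt 2 * Real.sqrt 2 = 2 := Real.mul_self_sqrt (by norm_num)
  -- first derivative of v
  have hdv : ∀ t : ℝ, HasDerivAt v ((1 - v t ^ 2) / Real.sqrt 2) t := by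
    intro t
    rw [hv]
    have h1 : HasDerivAt (fun t : ℝ => t / Real.sqrt 2) (1 / Real.sqrt 2) t :=
      (hasDerivAt_id t).div_const _
    simpa [div_eq_mul_inv, mul_comm, Function.comp_def] using (hasDerivAt_tanh' (t / Real.sqrt 2)).comp t h1
  have hderiv_v : deriv v = fun t => (1 - v t ^ 2) / Real.sqrt 2 := by
    funext t; exact (hdv t).deriv
  -- second derivative of v
  have hdv2 : ∀ t : ℝ, HasDerivAt (deriv v) (v t ^ 3 - v t) t := by
    intro t
    rw [hderiv_v]
    have h1 : HasDerivAt (fun t => (1 - v t ^ 2) / Real.sqrt 2)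
        ((-(2 * v t * ((1 - v t ^ 2) / Real.sqrt 2))) / Real.sqrt 2) t := by
      exact (((hasDerivAt_const t (1:ℝ)).sub ((hdv t).pow 2)).div_const _).congr_deriv (by
        ring)
    convert h1 using 1
    field_simp
    rw [Real.sq_sqrt (by norm_num : (0:ℝ) ≤ 2)]
    ring
  have hderiv_v2 : deriv (deriv v) = fun t => v t ^ 3 - v t := by
    funext t; exact (hdv2 t).deriv
  -- first derivative of ψ₁
  have hdψ : ∀ t : ℝ, HasDerivAt ψ₁
      ((1 / 2) * deriv v t + (1 / 2) * t * (v t ^ 3 - v t)) t := by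
    intro t
    rw [hψ₁]
    have h1 : HasDerivAt (fun t : ℝ => (1 / 2) * t) (1 / 2) t := by
      simpa using (hasDerivAt_id t).const_mul (1 / 2 : ℝ)
    simpa [mul_comm, mul_assoc, Pi.mul_def] using h1.mul (hdv2 t)
  have hderiv_ψ : deriv ψ₁ = fun t =>
      (1 / 2) * deriv v t + (1 / 2) * t * (v t ^ 3 - v t) := by
    funext t; exact (hdψ t).deriv
  -- second derivative of ψ₁
  have hdψ2 : ∀ t : ℝ, HasDerivAt (deriv ψ₁)
      ((v t ^ 3 - v t) + (1 / 2) * t * ((3 * v t ^ 2 - 1) * ((1 - v t ^ 2) / Real.sqrt 2))) t := by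
    intro t
    rw [hderiv_ψ]
    have h1 : HasDerivAt (fun t : ℝ => (1 / 2) * t) (1 / 2) t := by
      simpa using (hasDerivAt_id t).const_mul (1 / 2 : ℝ)
    have hcube : HasDerivAt (fun t => v t ^ 3 - v t)
        ((3 * v t ^ 2 - 1) * ((1 - v t ^ 2) / Real.sqrt 2)) t := by
      have := ((hdv t).pow 3).sub (hdv t)
      refine this.congr_deriv ?_
      push_cast
      ring
    have := (((hdv2 t).const_mul (1 / 2 : ℝ))).add (h1.mul hcube)
    refine this.congr_deriv ?_
    ring
  constructor
  · intro t
    rw [(hdψ2 t).deriv, hderiv_v2, hψ₁, hderiv_v]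
    have h1 : (1 - v t ^ 2) / Real.sqrt 2 * Real.sqrt 2 = 1 - v t ^ 2 := by
      field_simp
    field_simp
    ring
  constructor
  · intro t
    rw [hψ₁, hderiv_v]
    have : v (-t) = - v t := by rw [hv]; simp [neg_div, Real.tanh_neg]
    simp only [this]
    ring
  · have hodd : ∀ t : ℝ, ψ₁ (-t) * deriv v (-t) = -(ψ₁ t * deriv v t) := by
      intro t
      have h1 : v (-t) = - v t := by rw [hv]; simp [neg_div, Real.tanh_neg]
      rw [hψ₁, hderiv_v]
      simp only [h1]
      ring
    have := integral_neg_eq_self (fun t => ψ₁ t * deriv v t) (volume : Measure ℝ)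
    simp only [hodd] at this
    rw [integral_neg] at this
    linarith
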